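/- Assume the partition setup for R, W, V_1, …, V_s, W_1, …, W_s, U_1, …, U_s. Suppose m is an even integer with m ≥ 4s, R contains no cycle of length m, |V_i ∪ V_j| ≥ m for all 1 ≤ i ≠ j ≤ s, and for every 1 ≤ i ≤ s, every pair of distinct vertices x, y ∈ V_i, and every integer L with 2 ≤ L ≤ m/2, there is a path in R from x to y of length L all of whose vertices lie in V_i. Let F be the bipartite graph with parts W and {1, …, s} in which w ∈ W is joined to i if and only if w ∈ U_i. Then F is a forest (contains no cycle). -/

import Mathlib

/-- `G` contains a cycle of length `m`. -/
def HasCycleLen {V : Type*} (G : SimpleGraph V) (m : ℕ) : Prop :=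
  ∃ (v : V) (c : G.Walk v v), c.IsCycle ∧ c.length = m

/-- The subgraph of `R` induced by the finite vertex set `A` is 2-connected:
it has at least 3 vertices, is connected, and remains connected after deleting
any one vertex. -/
def TwoConnectedOn {V : Type*} [DecidableEq V] (R : SimpleGraph V) (A : Finset V) : Prop :=
  3 ≤ A.card ∧ (R.induce (A : Set V)).Connected ∧
    ∀ v ∈ A, (R.induce ((A.erase v : Finset V) : Set V)).Connected

/-- `W_i`: the vertices of `W` having at least `2s` neighbours (in `R`) inside `A`. -/
def bigNbrSet {V : Type*} [DecidableEq V] (R : SimpleGraph V) [DecidableRel R.Adj]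
    (s : ℕ) (W A : Finset V) : Finset V :=
  W.filter fun w => 2 * s ≤ (A.filter fun v => R.Adj w v).card

namespace Stmt10Aux

open SimpleGraph

variable {V : Type*} [DecidableEq V]

/-- Flatten a list of (vertex, index) pairs into an alternating list. -/
def flatPairs {s : ℕ} : List (V × Fin s) → List (V ⊕ Fin s)
  | [] => []
  | pr :: L => Sum.inl pr.1 :: Sum.inr pr.2 :: flatPairs L

@[simp] lemma flatPairs_nil {s : ℕ} : (flatPairs ([] : List (V × Fin s))) = [] := rfl

@[simp] lemma flatPairs_cons {s : ℕ} (pr : V × Fin s) (L : List (V × Fin s)) :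
    flatPairs (pr :: L) = Sum.inl pr.1 :: Sum.inr pr.2 :: flatPairs L := rfl

lemma flatPairs_length {s : ℕ} (L : List (V × Fin s)) :
    (flatPairs L).length = 2 * L.length := by
  induction L with
  | nil => rfl
  | cons pr L ih => simp [ih]; omega

lemma sublist_fst {s : ℕ} (L : List (V × Fin s)) :
    (L.map fun pr => (Sum.inl pr.1 : V ⊕ Fin s)).Sublist (flatPairs L) := by
  induction L with
  | nil => simp
  | cons pr L ih => simpa using ((ih.cons (Sum.inr pr.2)).cons₂ (Sum.inl pr.1))

lemma sublist_snd {s : ℕ} (L : List (V × Fin s)) :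
    (L.map fun pr => (Sum.inr pr.2 : V ⊕ Fin s)).Sublist (flatPairs L) := by
  induction L with
  | nil => simp
  | cons pr L ih => simpa using ((ih.cons₂ (Sum.inr pr.2)).cons (Sum.inl pr.1))

lemma path_concat {G : SimpleGraph V} {u v w : V} {p : G.Walk u v} (hp : p.IsPath)
    (h : G.Adj v w) (hw : w ∉ p.support) : (p.concat h).IsPath := by
  rw [SimpleGraph.Walk.isPath_def, SimpleGraph.Walk.support_concat]
  refine hp.support_nodup.append (List.nodup_singleton w) (fun x hx hx' => ?_)
  rw [List.mem_singleton] at hx'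
  subst hx'; exact hw hx

lemma path_append {G : SimpleGraph V} {u v w : V} {p : G.Walk u v} {q : G.Walk v w}
    (hp : p.IsPath) (hq : q.IsPath) (hj : ∀ x, x ∈ p.support → x ∈ q.support → x = v) :
    (p.append q).IsPath := by
  rw [SimpleGraph.Walk.isPath_def, SimpleGraph.Walk.support_append]
  have hqn := hq.support_nodup
  rw [q.support_eq_cons, List.nodup_cons] at hqn
  refine hp.support_nodup.append hqn.2 (fun x hx hx' => ?_)
  have := hj x hx (List.mem_of_mem_tail hx')
  subst this; exact hqn.1 hx'

lemma pick_nbr (R : SimpleGraph V) [DecidableRel R.Adj] (A : Finset V) (w avoid : V)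
    (h : 2 ≤ (A.filter fun v => R.Adj w v).card) :
    ∃ x, x ∈ A ∧ R.Adj w x ∧ x ≠ avoid := by
  obtain ⟨x, hx, hne⟩ :=
    Finset.exists_mem_ne (s := A.filter fun v => R.Adj w v) (by omega) avoid
  rw [Finset.mem_filter] at hx
  exact ⟨x, hx.1, hx.2, hne⟩

lemma chain'_imp_mem {α : Type*} {r r' : α → α → Prop} :
    ∀ {l : List α}, (∀ a ∈ l, ∀ b ∈ l, r a b → r' a b) → List.Chain' r l → List.Chain' r' l := by
  intro l
  induction l with
  | nil => intro _ _; exact List.isChain_nil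
  | cons a l ih =>
    intro h hc
    cases l with
    | nil => exact List.isChain_singleton a
    | cons b l' =>
      simp only [List.Chain', List.isChain_cons_cons] at hc ⊢
      exact ⟨h a (by simp) b (by simp) hc.1,
        ih (fun x hx y hy => h x (by simp [hx]) y (by simp [hy])) hc.2⟩

lemma aux_build {R : SimpleGraph V} [DecidableRel R.Adj]
    {s : ℕ} {W : Finset V} {Vp : Fin s → Finset V} {m : ℕ}
    (hdisjWV : ∀ i, Disjoint W (Vp i))
    (hdisjVV : ∀ i j, i ≠ j → Disjoint (Vp i) (Vp j))
    (hpaths : ∀ i, ∀ x ∈ Vp i, ∀ y ∈ Vp i, x ≠ y → ∀ L : ℕ, 2 ≤ L → L ≤ m / 2 →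
      ∃ pw : R.Walk x y, pw.IsPath ∧ pw.length = L ∧ ∀ v ∈ pw.support, v ∈ Vp i)
    (wend : V) (hwendW : wend ∈ W) :
    ∀ (M : List (V × Fin s)) (pr0 lpr : V × Fin s) (ℓs : List ℕ),
      (pr0 :: M).getLast? = some lpr →
      ℓs.length = M.length + 1 →
      (∀ ℓ ∈ ℓs, 2 ≤ ℓ ∧ ℓ ≤ m / 2) →
      (∀ pr ∈ pr0 :: M, pr.1 ∈ W ∧ 2 ≤ ((Vp pr.2).filter fun v => R.Adj pr.1 v).card) →
      List.Chain' (fun a b => 2 ≤ ((Vp a.2).filter fun v => R.Adj b.1 v).card) (pr0 :: M) →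
      2 ≤ ((Vp lpr.2).filter fun v => R.Adj wend v).card →
      ((pr0 :: M).map Prod.fst).Nodup →
      ((pr0 :: M).map Prod.snd).Nodup →
      wend ∉ (pr0 :: M).map Prod.fst →
      ∃ (y : V) (hy : R.Adj y wend) (Q₀ : R.Walk pr0.1 y),
        y ∈ Vp lpr.2 ∧
        (Q₀.concat hy).IsPath ∧
        (Q₀.concat hy).length = (ℓs.map (· + 2)).sum ∧
        ∀ v ∈ (Q₀.concat hy).support,
          v = wend ∨ v ∈ (pr0 :: M).map Prod.fst ∨ ∃ pr ∈ pr0 :: M, v ∈ Vp pr.2 := by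
  intro M
  induction M with
  | nil =>
    intro pr0 lpr ℓs hlpr hlen hbnd hpairs _hchain hclose hnf _hns hwf
    have hlpr' : pr0 = lpr := by simpa using hlpr
    subst hlpr'
    obtain ⟨ℓ, rfl⟩ := List.length_eq_one_iff.mp hlen
    obtain ⟨hℓ2, hℓm⟩ := hbnd ℓ (by simp)
    -- pick y: neighbour of wend in Vp pr0.2
    obtain ⟨y, hyV, hyadj, -⟩ := pick_nbr R (Vp pr0.2) wend wend hclose
    -- pick x: neighbour of pr0.1 in Vp pr0.2, different from y
    obtain ⟨x, hxV, hxadj, hxy⟩ := pick_nbr R (Vp pr0.2) pr0.1 y (hpairs pr0 (by simp)).2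
    obtain ⟨inner, hip, hil, hisupp⟩ := hpaths pr0.2 x hxV y hyV hxy ℓ hℓ2 hℓm
    have hw0W : pr0.1 ∈ W := (hpairs pr0 (by simp)).1
    have hwnotV : ∀ u ∈ W, u ∉ Vp pr0.2 := fun u hu =>
      Finset.disjoint_left.mp (hdisjWV pr0.2) hu
    refine ⟨y, hyadj.symm, SimpleGraph.Walk.cons hxadj inner, hyV, ?_, ?_, ?_⟩
    · refine path_concat ?_ _ ?_
      · exact hip.cons (fun hmem => hwnotV pr0.1 hw0W (hisupp _ hmem))
      · rw [SimpleGraph.Walk.support_cons]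
        intro hmem
        rw [List.mem_cons] at hmem
        rcases hmem with h | h
        · exact hwf (by simp [h])
        · exact hwnotV wend hwendW (hisupp _ h)
    · rw [SimpleGraph.Walk.length_concat, SimpleGraph.Walk.length_cons, hil]
      simp
    · intro v hv
      rw [SimpleGraph.Walk.support_concat, List.mem_append,
        SimpleGraph.Walk.support_cons, List.mem_cons] at hv
      rcases hv with (h | h) | h
      · exact Or.inr (Or.inl (by simp [h]))
      · exact Or.inr (Or.inr ⟨pr0, by simp, hisupp _ h⟩)
      · rw [List.mem_singleton] at h; exact Or.inl h
  | cons pr1 M' ih =>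
    intro pr0 lpr ℓs hlpr hlen hbnd hpairs hchain hclose hnf hns hwf
    cases ℓs with
    | nil => simp at hlen
    | cons ℓ ℓs' =>
    obtain ⟨hℓ2, hℓm⟩ := hbnd ℓ (by simp)
    rw [List.getLast?_cons_cons] at hlpr
    simp only [List.Chain', List.isChain_cons_cons] at hchain
    obtain ⟨hch1, hchain'⟩ := hchain
    rw [List.map_cons, List.nodup_cons] at hnf
    rw [List.map_cons, List.nodup_cons] at hns
    have hwf' : wend ≠ pr0.1 ∧ wend ∉ (pr1 :: M').map Prod.fst := by
      simpa [not_or] using hwf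
    obtain ⟨y, hy, Q₀', hyVp, hQ'path, hQ'len, hQ'supp⟩ :=
      ih pr1 lpr ℓs' hlpr (by simpa using hlen) (fun a ha => hbnd a (by simp [ha]))
        (fun pr hpr => hpairs pr (List.mem_cons_of_mem _ hpr)) hchain' hclose
        hnf.2 hns.2 hwf'.2
    -- helper facts
    have hw0W : pr0.1 ∈ W := (hpairs pr0 (by simp)).1
    have hw1W : pr1.1 ∈ W := (hpairs pr1 (by simp)).1
    have hWnot : ∀ u ∈ W, ∀ j, u ∉ Vp j := fun u hu j =>
      Finset.disjoint_left.mp (hdisjWV j) hu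
    have hmapW : ∀ u ∈ (pr1 :: M').map Prod.fst, u ∈ W := by
      intro u hu
      obtain ⟨pr, hpr, rfl⟩ := List.mem_map.mp hu
      exact (hpairs pr (List.mem_cons_of_mem _ hpr)).1
    have hsndD : ∀ pr ∈ pr1 :: M', Disjoint (Vp pr0.2) (Vp pr.2) := by
      intro pr hpr
      refine hdisjVV _ _ (fun heq => hns.1 ?_)
      exact heq ▸ List.mem_map.mpr ⟨pr, hpr, rfl⟩
    have hne01 : pr0.1 ≠ pr1.1 := fun heq => hnf.1 (by simp [heq])
    -- pick y₀: neighbour of pr1.1 in Vp pr0.2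
    obtain ⟨y₀, hy₀V, hy₀adj, -⟩ := pick_nbr R (Vp pr0.2) pr1.1 pr1.1 hch1
    -- pick x: neighbour of pr0.1 in Vp pr0.2 avoiding y₀
    obtain ⟨x, hxV, hxadj, hxy⟩ := pick_nbr R (Vp pr0.2) pr0.1 y₀ (hpairs pr0 (by simp)).2
    obtain ⟨inner, hip, hil, hisupp⟩ := hpaths pr0.2 x hxV y₀ hy₀V hxy ℓ hℓ2 hℓm
    set Seg : R.Walk pr0.1 pr1.1 :=
      SimpleGraph.Walk.cons hxadj (inner.concat hy₀adj.symm) with hSeg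
    have hSegSupp : Seg.support = pr0.1 :: (inner.support ++ [pr1.1]) := by
      rw [hSeg, SimpleGraph.Walk.support_cons, SimpleGraph.Walk.support_concat]
    have hSegPath : Seg.IsPath := by
      rw [hSeg]
      refine SimpleGraph.Walk.IsPath.cons ?_ ?_
      · exact path_concat hip _ (fun hmem => hWnot pr1.1 hw1W pr0.2 (hisupp _ hmem))
      · rw [SimpleGraph.Walk.support_concat, List.mem_append]
        rintro (h | h)
        · exact hWnot pr0.1 hw0W pr0.2 (hisupp _ h)
        · rw [List.mem_singleton] at h; exact hne01 h
    have hQ'cases : ∀ v ∈ (Q₀'.concat hy).support,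
        v = wend ∨ v ∈ (pr1 :: M').map Prod.fst ∨ ∃ pr ∈ pr1 :: M', v ∈ Vp pr.2 := hQ'supp
    have hjun : ∀ v, v ∈ Seg.support → v ∈ (Q₀'.concat hy).support → v = pr1.1 := by
      intro v hv1 hv2
      rw [hSegSupp, List.mem_cons, List.mem_append] at hv1
      rcases hv1 with h | h | h
      · exfalso
        subst h
        rcases hQ'cases _ hv2 with h2 | h2 | ⟨pr, hpr, h2⟩
        · exact hwf'.1 h2.symm
        · exact hnf.1 h2
        · exact hWnot pr0.1 hw0W pr.2 h2
      · exfalso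
        have hvV : v ∈ Vp pr0.2 := hisupp _ h
        rcases hQ'cases _ hv2 with h2 | h2 | ⟨pr, hpr, h2⟩
        · exact hWnot wend hwendW pr0.2 (h2 ▸ hvV)
        · exact hWnot v (hmapW v h2) pr0.2 hvV
        · exact Finset.disjoint_left.mp (hsndD pr hpr) hvV h2
      · rwa [List.mem_singleton] at h
    have hkey : (Seg.append Q₀').concat hy = Seg.append (Q₀'.concat hy) :=
      (SimpleGraph.Walk.append_concat _ _ _).symm
    refine ⟨y, hy, Seg.append Q₀', hyVp, ?_, ?_, ?_⟩
    · rw [hkey]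
      exact path_append hSegPath hQ'path hjun
    · rw [SimpleGraph.Walk.length_concat, SimpleGraph.Walk.length_append]
      rw [SimpleGraph.Walk.length_concat] at hQ'len
      have hSegLen : Seg.length = ℓ + 2 := by
        rw [hSeg, SimpleGraph.Walk.length_cons, SimpleGraph.Walk.length_concat, hil]
      rw [hSegLen]
      simp only [List.map_cons, List.sum_cons]
      omega
    · intro v hv
      rw [hkey, SimpleGraph.Walk.support_append, List.mem_append] at hv
      rcases hv with h | h
      · rw [hSegSupp, List.mem_cons, List.mem_append] at h
        rcases h with h | h | h
        · exact Or.inr (Or.inl (by simp [h]))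
        · exact Or.inr (Or.inr ⟨pr0, by simp, hisupp _ h⟩)
        · rw [List.mem_singleton] at h
          exact Or.inr (Or.inl (by simp [h]))
      · rcases hQ'cases _ (List.mem_of_mem_tail h) with h2 | h2 | ⟨pr, hpr, h2⟩
        · exact Or.inl h2
        · exact Or.inr (Or.inl (by rw [List.map_cons]; exact List.mem_cons_of_mem _ h2))
        · exact Or.inr (Or.inr ⟨pr, List.mem_cons_of_mem _ hpr, h2⟩)

lemma build_cycle {R : SimpleGraph V} [DecidableRel R.Adj]
    {s : ℕ} {W : Finset V} {Vp : Fin s → Finset V} {m : ℕ} (hs : 2 ≤ s)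
    (hWcard : W.card ≤ s - 1)
    (hdisjWV : ∀ i, Disjoint W (Vp i))
    (hdisjVV : ∀ i j, i ≠ j → Disjoint (Vp i) (Vp j))
    (hmEven : Even m) (hm : 4 * s ≤ m)
    (hpaths : ∀ i, ∀ x ∈ Vp i, ∀ y ∈ Vp i, x ≠ y → ∀ L : ℕ, 2 ≤ L → L ≤ m / 2 →
      ∃ pw : R.Walk x y, pw.IsPath ∧ pw.length = L ∧ ∀ v ∈ pw.support, v ∈ Vp i)
    (L : List (V × Fin s)) (hL2 : 2 ≤ L.length)
    (hpairs : ∀ pr ∈ L, pr.1 ∈ W ∧ 2 ≤ ((Vp pr.2).filter fun v => R.Adj pr.1 v).card)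
    (hchain : List.Chain' (fun a b => 2 ≤ ((Vp a.2).filter fun v => R.Adj b.1 v).card) L)
    (hclose : ∀ pr0 prl, L.head? = some pr0 → L.getLast? = some prl →
        2 ≤ ((Vp prl.2).filter fun v => R.Adj pr0.1 v).card)
    (hnf : (L.map Prod.fst).Nodup) (hns : (L.map Prod.snd).Nodup) :
    HasCycleLen R m := by
  cases L with
  | nil => simp at hL2
  | cons pr0 L' =>
  cases L' with
  | nil => simp at hL2
  | cons pr1 M =>
  -- bound on the length
  have hsub : ((pr0 :: pr1 :: M).map Prod.fst).toFinset ⊆ W := by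
    intro u hu
    rw [List.mem_toFinset] at hu
    obtain ⟨pr, hpr, rfl⟩ := List.mem_map.mp hu
    exact (hpairs pr hpr).1
  have hk : M.length + 2 ≤ s - 1 := by
    have := Finset.card_le_card hsub
    rw [List.toFinset_card_of_nodup hnf] at this
    have h' := this.trans hWcard
    simp at h'
    omega
  have h2 : m / 2 * 2 = m := Nat.div_mul_cancel hmEven.two_dvd
  obtain ⟨a, b, ha2, haM, hb2, hbM, hsum⟩ :
      ∃ a b, 2 ≤ a ∧ a ≤ m / 2 ∧ 2 ≤ b ∧ b ≤ m / 2 ∧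
        (a + 2) + ((b + 2) + M.length * 4) = m := by
    refine ⟨min (m / 2) (m - 4 * M.length - 6),
      (m - 4 * M.length - 4) - min (m / 2) (m - 4 * M.length - 6), ?_, ?_, ?_, ?_, ?_⟩ <;> omega
  set ℓs' : List ℕ := b :: List.replicate M.length 2 with hℓs'
  have hbounds : ∀ ℓ ∈ ℓs', 2 ≤ ℓ ∧ ℓ ≤ m / 2 := by
    intro ℓ hℓ
    rw [hℓs', List.mem_cons] at hℓ
    rcases hℓ with rfl | hℓ
    · exact ⟨hb2, hbM⟩
    · rw [List.eq_of_mem_replicate hℓ]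
      omega
  set prl := (pr1 :: M).getLast (by simp) with hprldef
  have hprl : (pr1 :: M).getLast? = some prl := List.getLast?_eq_getLast _
  have hlprL : (pr0 :: pr1 :: M).getLast? = some prl := by
    rw [List.getLast?_cons_cons]; exact hprl
  simp only [List.Chain', List.isChain_cons_cons] at hchain
  obtain ⟨hch1, hchain'⟩ := hchain
  rw [List.map_cons, List.nodup_cons] at hnf
  rw [List.map_cons, List.nodup_cons] at hns
  have hw0W : pr0.1 ∈ W := (hpairs pr0 (by simp)).1
  have hw1W : pr1.1 ∈ W := (hpairs pr1 (by simp)).1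
  have hWnot : ∀ u ∈ W, ∀ j, u ∉ Vp j := fun u hu j =>
    Finset.disjoint_left.mp (hdisjWV j) hu
  have hmapW : ∀ u ∈ (pr1 :: M).map Prod.fst, u ∈ W := by
    intro u hu
    obtain ⟨pr, hpr, rfl⟩ := List.mem_map.mp hu
    exact (hpairs pr (List.mem_cons_of_mem _ hpr)).1
  have hsndD : ∀ pr ∈ pr1 :: M, Disjoint (Vp pr0.2) (Vp pr.2) := by
    intro pr hpr
    refine hdisjVV _ _ (fun heq => hns.1 ?_)
    exact heq ▸ List.mem_map.mpr ⟨pr, hpr, rfl⟩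
  obtain ⟨y, hy, Q₀', hyVp, hQ'path, hQ'len, hQ'supp⟩ :=
    aux_build hdisjWV hdisjVV hpaths pr0.1 hw0W M pr1 prl ℓs' hprl (by simp [hℓs'])
      hbounds (fun pr hpr => hpairs pr (List.mem_cons_of_mem _ hpr)) hchain'
      (hclose pr0 prl (by simp) hlprL) hnf.2 hns.2 hnf.1
  -- the first segment
  obtain ⟨y₀, hy₀V, hy₀adj, -⟩ := pick_nbr R (Vp pr0.2) pr1.1 pr1.1 hch1
  obtain ⟨x₀, hx₀V, hx₀adj, hx₀y₀⟩ := pick_nbr R (Vp pr0.2) pr0.1 y₀ (hpairs pr0 (by simp)).2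
  obtain ⟨inner₀, hip₀, hil₀, hisupp₀⟩ := hpaths pr0.2 x₀ hx₀V y₀ hy₀V hx₀y₀ a ha2 haM
  set A : R.Walk x₀ y := inner₀.append (SimpleGraph.Walk.cons hy₀adj.symm Q₀') with hA
  set Q : R.Walk x₀ pr0.1 := A.concat hy with hQdef
  have hQalt : Q = inner₀.append (SimpleGraph.Walk.cons hy₀adj.symm (Q₀'.concat hy)) := by
    rw [hQdef, hA, ← SimpleGraph.Walk.append_concat, SimpleGraph.Walk.concat_cons]
  have hVdisj : ∀ v ∈ (Q₀'.concat hy).support, v ∉ Vp pr0.2 := by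
    intro v hv hvV
    rcases hQ'supp _ hv with h2 | h2 | ⟨pr, hpr, h2⟩
    · exact hWnot pr0.1 hw0W pr0.2 (h2 ▸ hvV)
    · exact hWnot v (hmapW v h2) pr0.2 hvV
    · exact Finset.disjoint_left.mp (hsndD pr hpr) hvV h2
  have hconsPath : (SimpleGraph.Walk.cons hy₀adj.symm (Q₀'.concat hy)).IsPath :=
    hQ'path.cons (fun hmem => hVdisj _ hmem hy₀V)
  have hQpath : Q.IsPath := by
    rw [hQalt]
    refine path_append hip₀ hconsPath ?_
    intro v hv1 hv2
    rw [SimpleGraph.Walk.support_cons, List.mem_cons] at hv2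
    rcases hv2 with h | h
    · exact h
    · exact absurd (hisupp₀ _ hv1) (hVdisj _ h)
  have hprlMem : prl ∈ pr1 :: M := by rw [hprldef]; exact List.getLast_mem _
  have hedge : s(pr0.1, x₀) ∉ Q.edges := by
    intro hmem
    have hrev : s(pr0.1, x₀) ∈ Q.reverse.edges := by
      rw [SimpleGraph.Walk.edges_reverse, List.mem_reverse]; exact hmem
    have hQrev : Q.reverse.IsPath := hQpath.reverse
    rw [hQdef, SimpleGraph.Walk.reverse_concat] at hrev hQrev
    rw [SimpleGraph.Walk.edges_cons] at hrev
    rcases List.mem_cons.mp hrev with heq | hmem'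
    · have hxy' : x₀ = y := Sym2.congr_right.mp heq
      refine Finset.disjoint_left.mp (hsndD prl hprlMem) hx₀V ?_
      rw [hxy']; exact hyVp
    · have h1 : pr0.1 ∈ A.reverse.support :=
        SimpleGraph.Walk.fst_mem_support_of_mem_edges _ hmem'
      rw [SimpleGraph.Walk.cons_isPath_iff] at hQrev
      exact hQrev.2 h1
  have hcyc : (SimpleGraph.Walk.cons hx₀adj Q).IsCycle :=
    (SimpleGraph.Walk.cons_isCycle_iff Q hx₀adj).mpr ⟨hQpath, hedge⟩
  have hsum' : (ℓs'.map (· + 2)).sum = (b + 2) + M.length * 4 := by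
    simp [hℓs', List.sum_replicate, mul_comm]
  have hlen : (SimpleGraph.Walk.cons hx₀adj Q).length = m := by
    rw [SimpleGraph.Walk.length_cons, hQdef, SimpleGraph.Walk.length_concat, hA,
      SimpleGraph.Walk.length_append, SimpleGraph.Walk.length_cons, hil₀]
    rw [SimpleGraph.Walk.length_concat, hsum'] at hQ'len
    omega
  exact ⟨pr0.1, SimpleGraph.Walk.cons hx₀adj Q, hcyc, hlen⟩


lemma ext_walk {s : ℕ} {F : SimpleGraph (V ⊕ Fin s)} (U : Fin s → Finset V) (W : Finset V)
    (hadj : ∀ a b, F.Adj a b → ∃ w i,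
      ((a = Sum.inl w ∧ b = Sum.inr i) ∨ (a = Sum.inr i ∧ b = Sum.inl w)) ∧ w ∈ W ∧ w ∈ U i)
    (w₀ : V) :
    ∀ {x z : V ⊕ Fin s} (p : F.Walk x z), z = Sum.inl w₀ →
      ∃ L : List (V × Fin s),
        (∀ pr ∈ L, pr.1 ∈ W ∧ pr.1 ∈ U pr.2) ∧
        List.Chain' (fun a b => b.1 ∈ U a.2) L ∧
        (∀ pr, L.getLast? = some pr → w₀ ∈ U pr.2) ∧
        ((∃ w, x = Sum.inl w ∧ p.support = flatPairs L ++ [Sum.inl w₀]) ∨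
         (∃ i, x = Sum.inr i ∧ p.support = Sum.inr i :: (flatPairs L ++ [Sum.inl w₀]) ∧
            (∀ pr, L.head? = some pr → pr.1 ∈ U i) ∧ (L = [] → w₀ ∈ U i))) := by
  intro x z p
  induction p with
  | nil =>
    rintro rfl
    exact ⟨[], by simp, List.isChain_nil, by simp, Or.inl ⟨w₀, rfl, by simp⟩⟩
  | @cons u v _ h p ih =>
    intro hz
    subst hz
    obtain ⟨w, i, hcase, hwW, hwU⟩ := hadj _ _ h
    obtain ⟨L', hpairs, hchain, hlast, hsupp⟩ := ih rfl
    rcases hcase with ⟨hx, hv⟩ | ⟨hx, hv⟩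
    · -- u = inl w, v = inr i
      subst hx; subst hv
      rcases hsupp with ⟨w', hw', -⟩ | ⟨i', hi', hsup, hhead, hnil⟩
      · exact absurd hw' (by simp)
      · have hii : i' = i := by
          have := hi'.symm
          simpa using this
        rw [hii] at hhead hnil hsup
        refine ⟨(w, i) :: L', ?_, ?_, ?_, Or.inl ⟨w, rfl, ?_⟩⟩
        · intro pr hpr
          rcases List.mem_cons.mp hpr with rfl | hpr
          · exact ⟨hwW, hwU⟩
          · exact hpairs pr hpr
        · refine List.isChain_cons.mpr ⟨?_, hchain⟩
          intro y hy
          exact hhead y hy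
        · intro pr hpr
          cases L' with
          | nil =>
            have : pr = (w, i) := by simpa using hpr.symm
            subst this
            exact hnil rfl
          | cons q L'' =>
            rw [List.getLast?_cons_cons] at hpr
            exact hlast pr hpr
        · rw [SimpleGraph.Walk.support_cons, hsup]
          simp
    · -- u = inr i, v = inl w
      subst hx; subst hv
      rcases hsupp with ⟨w', hw', hsup⟩ | ⟨i', hi', -⟩
      · have hww : w' = w := by
          have := hw'.symm
          simpa using this
        subst hww
        have hhd : (Sum.inl w' : V ⊕ Fin s) :: p.support.tail = p.support :=
          (SimpleGraph.Walk.support_eq_cons p).symm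
        refine ⟨L', hpairs, hchain, hlast, Or.inr ⟨i, rfl, ?_, ?_, ?_⟩⟩
        · rw [SimpleGraph.Walk.support_cons, hsup]
        · intro pr hpr
          cases L' with
          | nil => simp at hpr
          | cons q L'' =>
            have hq : pr = q := by simpa using hpr.symm
            subst hq
            rw [hsup] at hhd
            simp only [flatPairs_cons, List.cons_append] at hhd
            injection hhd with h1 _
            injection h1 with h2
            rw [← h2]
            exact hwU
        · intro hL'
          subst hL'
          rw [hsup] at hhd
          simp only [flatPairs_nil, List.nil_append] at hhd
          injection hhd with h1 _
          injection h1 with h2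
          rw [← h2]
          exact hwU
      · exact absurd hi' (by simp)

end Stmt10Aux

theorem stmt10 (V : Type*) [Fintype V] [DecidableEq V]
    (R : SimpleGraph V) [DecidableRel R.Adj]
    (s : ℕ) (hs : 2 ≤ s)
    (W : Finset V) (Vp : Fin s → Finset V)
    (hWcard : W.card ≤ s - 1)
    (hdisjWV : ∀ i, Disjoint W (Vp i))
    (hdisjVV : ∀ i j, i ≠ j → Disjoint (Vp i) (Vp j))
    (hcover : ∀ v : V, v ∈ W ∨ ∃ i, v ∈ Vp i)
    (hnoedge : ∀ i j, i ≠ j → ∀ x ∈ Vp i, ∀ y ∈ Vp j, ¬ R.Adj x y)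
    (h2conn : ∀ i, TwoConnectedOn R (Vp i))
    (m : ℕ) (hmEven : Even m) (hm : 4 * s ≤ m)
    (hnoCm : ¬ HasCycleLen R m)
    (hunion : ∀ i j, i ≠ j → m ≤ (Vp i ∪ Vp j).card)
    (hpaths : ∀ i, ∀ x ∈ Vp i, ∀ y ∈ Vp i, x ≠ y → ∀ L : ℕ, 2 ≤ L → L ≤ m / 2 →
      ∃ pw : R.Walk x y, pw.IsPath ∧ pw.length = L ∧ ∀ v ∈ pw.support, v ∈ Vp i) :
    (SimpleGraph.fromRel fun a b : V ⊕ Fin s =>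
      ∃ w i, a = Sum.inl w ∧ b = Sum.inr i ∧ w ∈ W ∧
        w ∈ Vp i ∪ bigNbrSet R s W (Vp i)).IsAcyclic := by
  set F : SimpleGraph (V ⊕ Fin s) := SimpleGraph.fromRel fun a b : V ⊕ Fin s =>
      ∃ w i, a = Sum.inl w ∧ b = Sum.inr i ∧ w ∈ W ∧
        w ∈ Vp i ∪ bigNbrSet R s W (Vp i) with hF
  have hadj : ∀ a b : V ⊕ Fin s, F.Adj a b → ∃ w i,
      ((a = Sum.inl w ∧ b = Sum.inr i) ∨ (a = Sum.inr i ∧ b = Sum.inl w)) ∧ w ∈ W ∧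
        w ∈ Vp i ∪ bigNbrSet R s W (Vp i) := by
    intro a b hab
    rw [hF, SimpleGraph.fromRel_adj] at hab
    rcases hab.2 with ⟨w, i, rfl, rfl, hW, hU⟩ | ⟨w, i, rfl, rfl, hW, hU⟩
    · exact ⟨w, i, Or.inl ⟨rfl, rfl⟩, hW, hU⟩
    · exact ⟨w, i, Or.inr ⟨rfl, rfl⟩, hW, hU⟩
  have hUcard : ∀ (w : V) (i : Fin s), w ∈ W → w ∈ Vp i ∪ bigNbrSet R s W (Vp i) →
      2 ≤ ((Vp i).filter fun v => R.Adj w v).card := by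
    intro w i hwW hwU
    rcases Finset.mem_union.mp hwU with h | h
    · exact absurd h (Finset.disjoint_left.mp (hdisjWV i) hwW)
    · have := (Finset.mem_filter.mp h).2
      omega
  have key : ∀ (w₀ : V) (c : F.Walk (Sum.inl w₀) (Sum.inl w₀)), c.IsCycle → False := by
    intro w₀ c hc
    obtain ⟨L, hpairsU, hchainU, hlastU, hsupp⟩ :=
      Stmt10Aux.ext_walk (fun i => Vp i ∪ bigNbrSet R s W (Vp i)) W hadj w₀ c rfl
    rcases hsupp with ⟨w, -, hsup⟩ | ⟨i, hi, -⟩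
    swap
    · exact absurd hi (by simp)
    -- L has length at least 2
    have hlen3 := hc.three_le_length
    have hsuplen : c.support.length = c.length + 1 := c.length_support
    rw [hsup, List.length_append, Stmt10Aux.flatPairs_length] at hsuplen
    have hL2 : 2 ≤ L.length := by simp at hsuplen; omega
    obtain ⟨pr0, L1, rfl⟩ : ∃ pr0 L1, L = pr0 :: L1 := by
      cases L with
      | nil => simp at hL2
      | cons a l => exact ⟨a, l, rfl⟩
    obtain ⟨pr1, M, rfl⟩ : ∃ pr1 M, L1 = pr1 :: M := by
      cases L1 with
      | nil => simp at hL2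
      | cons a l => exact ⟨a, l, rfl⟩
    -- head of the chain is w₀
    have hhd := (SimpleGraph.Walk.support_eq_cons c).symm.trans hsup
    rw [Stmt10Aux.flatPairs_cons, List.cons_append] at hhd
    have hw0 : pr0.1 = w₀ := by
      injection hhd with h1 _
      injection h1 with h2
      exact h2.symm
    -- the tail of the support
    have hT : c.support.tail.Nodup := hc.support_nodup
    have hTeq : c.support.tail =
        (Sum.inr pr0.2 :: Stmt10Aux.flatPairs (pr1 :: M)) ++ [Sum.inl w₀] := by
      rw [hsup, Stmt10Aux.flatPairs_cons]
      simp
    rw [hTeq] at hT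
    -- nodup of second components
    have hsubsnd : ((pr0 :: pr1 :: M).map fun pr => (Sum.inr pr.2 : V ⊕ Fin s)).Sublist
        ((Sum.inr pr0.2 :: Stmt10Aux.flatPairs (pr1 :: M)) ++ [Sum.inl w₀]) := by
      rw [List.map_cons, List.cons_append]
      exact ((Stmt10Aux.sublist_snd (pr1 :: M)).trans
        (List.sublist_append_left _ _)).cons₂ _
    have hsnd : ((pr0 :: pr1 :: M).map Prod.snd).Nodup := by
      have h1 := hT.sublist hsubsnd
      rw [show (fun pr : V × Fin s => (Sum.inr pr.2 : V ⊕ Fin s)) =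
        Sum.inr ∘ Prod.snd from rfl, ← List.map_map] at h1
      exact h1.of_map _
    -- nodup of first components
    have hdisjT := (List.nodup_append.mp hT).2.2
    have hsubfst : ((pr1 :: M).map fun pr => (Sum.inl pr.1 : V ⊕ Fin s)).Sublist
        ((Sum.inr pr0.2 :: Stmt10Aux.flatPairs (pr1 :: M)) ++ [Sum.inl w₀]) := by
      rw [List.cons_append]
      exact ((Stmt10Aux.sublist_fst (pr1 :: M)).trans
        (List.sublist_append_left _ _)).cons _
    have hfsttail : ((pr1 :: M).map Prod.fst).Nodup := by
      have h1 := hT.sublist hsubfst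
      rw [show (fun pr : V × Fin s => (Sum.inl pr.1 : V ⊕ Fin s)) =
        Sum.inl ∘ Prod.fst from rfl, ← List.map_map] at h1
      exact h1.of_map _
    have hfst : ((pr0 :: pr1 :: M).map Prod.fst).Nodup := by
      rw [List.map_cons, List.nodup_cons]
      refine ⟨?_, hfsttail⟩
      intro hmem
      obtain ⟨pr, hpr, hpr1⟩ := List.mem_map.mp hmem
      have h1 : (Sum.inl pr0.1 : V ⊕ Fin s) ∈ Stmt10Aux.flatPairs (pr1 :: M) :=
        (Stmt10Aux.sublist_fst (pr1 :: M)).subset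
          (List.mem_map.mpr ⟨pr, hpr, by rw [hpr1]⟩)
      refine hdisjT _ (List.mem_cons_of_mem _ h1) _ ?_ rfl
      rw [hw0]
      simp
    -- translate the chain data into neighbour-count form
    have hpairs' : ∀ pr ∈ pr0 :: pr1 :: M,
        pr.1 ∈ W ∧ 2 ≤ ((Vp pr.2).filter fun v => R.Adj pr.1 v).card :=
      fun pr hpr => ⟨(hpairsU pr hpr).1,
        hUcard _ _ (hpairsU pr hpr).1 (hpairsU pr hpr).2⟩
    have hchain' : List.Chain'
        (fun a b => 2 ≤ ((Vp a.2).filter fun v => R.Adj b.1 v).card) (pr0 :: pr1 :: M) :=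
      Stmt10Aux.chain'_imp_mem
        (fun a _ b hb hr => hUcard b.1 a.2 (hpairsU b hb).1 hr) hchainU
    have hclose' : ∀ pra prl, (pr0 :: pr1 :: M).head? = some pra →
        (pr0 :: pr1 :: M).getLast? = some prl →
        2 ≤ ((Vp prl.2).filter fun v => R.Adj pra.1 v).card := by
      intro pra prl hh hl
      have hpra : pra = pr0 := by simpa using hh.symm
      subst hpra
      have hw0W : pra.1 ∈ W := (hpairs' pra (by simp)).1
      have := hlastU prl hl
      rw [← hw0] at this
      exact hUcard _ _ hw0W this
    exact hnoCm (Stmt10Aux.build_cycle hs hWcard hdisjWV hdisjVV hmEven hm hpaths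
      (pr0 :: pr1 :: M) (by simp) hpairs' hchain' hclose' hfst hsnd)
  intro v c hc
  rcases v with w₀ | i
  · exact key w₀ c hc
  · cases c with
    | nil => exact SimpleGraph.Walk.IsCycle.not_of_nil hc
    | @cons _ vmid _ h p =>
      obtain ⟨w, j, hcase, -, -⟩ := hadj _ _ h
      rcases hcase with ⟨habs, -⟩ | ⟨-, hv'⟩
      · exact absurd habs (by simp)
      · subst hv'
        have hmem : (Sum.inl w : V ⊕ Fin s) ∈ (SimpleGraph.Walk.cons h p).support := by
          rw [SimpleGraph.Walk.support_cons]
          exact List.mem_cons_of_mem _ p.start_mem_support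
        exact key w _ (hc.rotate hmem)
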